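/- Let 0 < γ < 1 and define ν(ζ,τ) = ζ E_γ(τ^γ) for ζ ∈ ℝ, τ ≥ 0. Then ν(ζ,0) = ζ for all ζ, and for every ζ ∈ ℝ and τ > 0, ν solves the nonlinear time-fractional Fokker–Planck equation D^γ_τ ν(ζ,τ) = −∂_ζ(3 ν(ζ,τ)² − (ζ/2) ν(ζ,τ)) + ∂²_{ζζ}(ζ ν(ζ,τ)²), where D^γ_τ is the Caputo time-fractional derivative. -/

import Mathlib

open MeasureTheory Real Filter

/-- The Mittag-Leffler function `E_γ(x) = Σ_{n=0}^∞ x^n / Γ(nγ+1)`. -/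
noncomputable def mittagLeffler (γ x : ℝ) : ℝ :=
  ∑' n : ℕ, x ^ n / Real.Gamma ((n : ℝ) * γ + 1)


lemma real_beta_integrable {a b τ : ℝ} (ha : 0 < a) (hb : 0 < b) (hτ : 0 < τ) :
    IntervalIntegrable (fun ρ => ρ ^ (a - 1) * (τ - ρ) ^ (b - 1)) volume 0 τ := by
  have h1 : IntervalIntegrable (fun ρ => ρ ^ (a - 1) * (τ - ρ) ^ (b - 1)) volume 0 (τ/2) := by
    apply (intervalIntegral.intervalIntegrable_rpow' (by linarith)).mul_continuousOn
    apply ContinuousOn.rpow_const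
    · exact (continuous_const.sub continuous_id).continuousOn
    · intro x hx
      rw [Set.uIcc_of_le (by linarith)] at hx
      left
      have := hx.2
      intro h; linarith [sub_eq_zero.mp h]
  have h2 : IntervalIntegrable (fun ρ => ρ ^ (a - 1) * (τ - ρ) ^ (b - 1)) volume (τ/2) τ := by
    have base : IntervalIntegrable (fun x : ℝ => x ^ (b - 1)) volume 0 (τ/2) :=
      intervalIntegral.intervalIntegrable_rpow' (by linarith)
    have hc : ContinuousOn (fun ρ : ℝ => ρ ^ (a - 1)) (Set.uIcc (τ - 0) (τ - (τ/2))) := by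
      apply ContinuousOn.rpow_const continuousOn_id
      intro x hx
      rw [show τ - 0 = τ by ring, show τ - τ/2 = τ/2 by ring,
        Set.uIcc_of_ge (by linarith), Set.mem_Icc] at hx
      left; simp only [id]; intro h; rw [h] at hx; linarith [hx.1]
    have := (base.comp_sub_left τ).mul_continuousOn hc
    rw [show τ - 0 = τ by ring, show τ - τ/2 = τ/2 by ring] at this
    refine this.symm.congr ?_
    exact fun x _ => mul_comm _ _
  exact h1.trans h2

lemma real_beta {a b τ : ℝ} (ha : 0 < a) (hb : 0 < b) (hτ : 0 < τ) :
    ∫ ρ in (0:ℝ)..τ, ρ ^ (a - 1) * (τ - ρ) ^ (b - 1)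
      = Gamma a * Gamma b / Gamma (a + b) * τ ^ (a + b - 1) := by
  have hab : (0:ℝ) < a + b := by linarith
  have hC : Complex.Gamma (a+b) ≠ 0 := by
    rw [show ((a:ℂ) + b) = ((a+b : ℝ) : ℂ) by push_cast; ring, Complex.Gamma_ofReal]
    exact_mod_cast (Real.Gamma_pos_of_pos hab).ne'
  have hbeta := Complex.Gamma_mul_Gamma_eq_betaIntegral (s := (a:ℂ)) (t := (b:ℂ))
    (by simpa using ha) (by simpa using hb)
  have hscaled := Complex.betaIntegral_scaled (a:ℂ) (b:ℂ) hτ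
  have key : (∫ ρ in (0:ℝ)..τ, (ρ:ℂ) ^ ((a:ℂ) - 1) * ((τ:ℂ) - ρ) ^ ((b:ℂ) - 1))
      = ((∫ ρ in (0:ℝ)..τ, ρ ^ (a - 1) * (τ - ρ) ^ (b - 1) : ℝ) : ℂ) := by
    rw [← intervalIntegral.integral_ofReal]
    apply intervalIntegral.integral_congr
    intro x hx
    rw [Set.uIcc_of_le hτ.le, Set.mem_Icc] at hx
    push_cast
    rw [Complex.ofReal_cpow hx.1 (a-1), Complex.ofReal_cpow (by linarith [hx.2] : (0:ℝ) ≤ τ - x) (b-1)]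
    push_cast; ring
  rw [key] at hscaled
  have : ((∫ ρ in (0:ℝ)..τ, ρ ^ (a - 1) * (τ - ρ) ^ (b - 1) : ℝ) : ℂ)
      = ((Gamma a * Gamma b / Gamma (a + b) * τ ^ (a + b - 1) : ℝ) : ℂ) := by
    rw [hscaled]
    have hbeta' : Complex.betaIntegral a b = Complex.Gamma a * Complex.Gamma b / Complex.Gamma ((a:ℂ)+b) := by
      field_simp at hbeta ⊢
      rw [hbeta]
    rw [hbeta']
    rw [show ((a:ℂ) + b - 1) = ((a + b - 1 : ℝ) : ℂ) by push_cast; ring,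
      ← Complex.ofReal_cpow hτ.le,
      show ((a:ℂ) + b) = ((a+b : ℝ) : ℂ) by push_cast; ring]
    rw [Complex.Gamma_ofReal, Complex.Gamma_ofReal, Complex.Gamma_ofReal]
    push_cast; ring
  exact_mod_cast this


lemma Gamma_step (γ : ℝ) (hγ0 : 0 < γ) (hγ1 : γ < 1) {y : ℝ} (hy : 0 < y) :
    Gamma (y + 1) ≤ Gamma (y + γ) * (y + γ) ^ (1 - γ) := by
  have hyg : 0 < y + γ := by linarith
  have h1 : (0:ℝ) < Gamma (y + γ) := Gamma_pos_of_pos hyg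
  have h2 : (0:ℝ) < Gamma (y + γ + 1) := Gamma_pos_of_pos (by linarith)
  have h3 : (0:ℝ) < Gamma (y + 1) := Gamma_pos_of_pos (by linarith)
  have hcx := Real.convexOn_log_Gamma.2 (Set.mem_Ioi.2 hyg) (Set.mem_Ioi.2 (by linarith : (0:ℝ) < y + γ + 1))
    hγ0.le (by linarith : (0:ℝ) ≤ 1 - γ) (by ring)
  have hpt : γ • (y + γ) + (1 - γ) • (y + γ + 1) = y + 1 := by
    simp only [smul_eq_mul]; ring
  rw [hpt] at hcx
  simp only [Function.comp_apply, smul_eq_mul] at hcx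
  have := Real.exp_le_exp.2 hcx
  rw [Real.exp_log h3, Real.exp_add] at this
  calc Gamma (y+1) ≤ exp (γ * log (Gamma (y + γ))) * exp ((1-γ) * log (Gamma (y + γ + 1))) := this
    _ = Gamma (y + γ) ^ γ * Gamma (y + γ + 1) ^ (1 - γ) := by
        rw [Real.rpow_def_of_pos h1, Real.rpow_def_of_pos h2, mul_comm (log _), mul_comm (log _)]
    _ = Gamma (y + γ) * (y + γ) ^ (1 - γ) := by
        rw [Real.Gamma_add_one hyg.ne', Real.mul_rpow hyg.le h1.le,
          show Gamma (y+γ) ^ γ * ((y+γ) ^ (1-γ) * Gamma (y+γ) ^ (1-γ))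
            = (Gamma (y+γ) ^ γ * Gamma (y+γ) ^ (1-γ)) * (y+γ) ^ (1-γ) by ring,
          ← Real.rpow_add h1]
        norm_num

lemma summable_ml_aux (γ : ℝ) (hγ0 : 0 < γ) (hγ1 : γ < 1) (x : ℝ) (hx : 0 ≤ x) :
    Summable (fun n : ℕ => ((n:ℝ) + 1) * x ^ n / Gamma ((n:ℝ) * γ + 1)) := by
  apply summable_of_ratio_norm_eventually_le (r := 1/2) (by norm_num)
  have htend : Tendsto (fun n : ℕ => ((n:ℝ) * γ + 1 + γ) ^ γ) atTop atTop := by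
    apply (tendsto_rpow_atTop hγ0).comp
    apply tendsto_atTop_add_const_right
    apply tendsto_atTop_add_const_right
    exact Tendsto.atTop_mul_const hγ0 tendsto_natCast_atTop_atTop
  filter_upwards [htend.eventually_ge_atTop (8 * x)] with n h8
  set y : ℝ := (n:ℝ) * γ + 1 with hy_def
  have hy1 : (1:ℝ) ≤ y := by
    have : (0:ℝ) ≤ (n:ℝ) * γ := by positivity
    simp [hy_def]; linarith
  have hy0 : (0:ℝ) < y := by linarith
  have hyg : (0:ℝ) < y + γ := by linarith
  have hΓy : (0:ℝ) < Gamma y := Gamma_pos_of_pos hy0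
  have hΓyg : (0:ℝ) < Gamma (y + γ) := Gamma_pos_of_pos hyg
  have hxn : (0:ℝ) ≤ x ^ n := by positivity
  have hcast : ((n+1:ℕ):ℝ) * γ + 1 = y + γ := by push_cast; ring
  have key : y * Gamma y ≤ Gamma (y + γ) * (y + γ) ^ (1 - γ) := by
    have := Gamma_step γ hγ0 hγ1 hy0
    rwa [Real.Gamma_add_one hy0.ne'] at this
  set Q : ℝ := (y + γ) ^ (1 - γ) with hQ_def
  set P : ℝ := (y + γ) ^ γ with hP_def
  have hQ0 : 0 < Q := Real.rpow_pos_of_pos hyg _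
  have hPQ : P * Q = y + γ := by
    rw [hP_def, hQ_def, ← Real.rpow_add hyg]
    norm_num
  have h8' : 8 * x ≤ P := h8
  have hxQ : x * Q ≤ y / 4 := by nlinarith [mul_nonneg (sub_nonneg.2 h8') hQ0.le]
  -- now the goal
  rw [Real.norm_of_nonneg (by positivity), Real.norm_of_nonneg (by positivity), hcast]
  rw [div_le_iff₀ hΓyg]
  rw [show (1/2) * (((n:ℝ)+1) * x ^ n / Gamma y) * Gamma (y+γ)
      = ((n:ℝ)+1) * x ^ n * Gamma (y+γ) / 2 / Gamma y by ring, le_div_iff₀ hΓy]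
  -- multiply both sides by Q
  rw [← mul_le_mul_iff_of_pos_right hQ0]
  push_cast
  rw [pow_succ]
  nlinarith [mul_le_mul_of_nonneg_left key (by positivity : (0:ℝ) ≤ ((n:ℝ)+1)*x^n/2),
             mul_le_mul_of_nonneg_left hxQ (by positivity : (0:ℝ) ≤ ((n:ℝ)+2)*x^n*Gamma y),
             mul_nonneg (mul_nonneg hxn hΓy.le) hy0.le,
             mul_nonneg (mul_nonneg (mul_nonneg (Nat.cast_nonneg n : (0:ℝ) ≤ (n:ℝ)) hxn) hΓy.le) hy0.le]



variable {γ : ℝ}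

lemma summable_ml (hγ0 : 0 < γ) (hγ1 : γ < 1) {x : ℝ} (hx : 0 ≤ x) :
    Summable (fun n : ℕ => x ^ n / Gamma ((n:ℝ) * γ + 1)) := by
  refine (summable_ml_aux γ hγ0 hγ1 x hx).of_nonneg_of_le (fun n => by positivity) (fun n => ?_)
  have hΓ : (0:ℝ) < Gamma ((n:ℝ) * γ + 1) := Gamma_pos_of_pos (by positivity)
  rw [div_le_div_iff_of_pos_right hΓ]
  nlinarith [mul_nonneg (Nat.cast_nonneg (α := ℝ) n) (pow_nonneg hx n)]

lemma summable_ml_deriv (hγ0 : 0 < γ) (hγ1 : γ < 1) {x : ℝ} (hx : 0 ≤ x) :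
    Summable (fun n : ℕ => ((n:ℝ) * γ) * x ^ n / Gamma ((n:ℝ) * γ + 1)) := by
  refine (summable_ml_aux γ hγ0 hγ1 x hx).of_nonneg_of_le (fun n => by positivity) (fun n => ?_)
  have hΓ : (0:ℝ) < Gamma ((n:ℝ) * γ + 1) := Gamma_pos_of_pos (by positivity)
  gcongr
  nlinarith [Nat.cast_nonneg (α := ℝ) n]

lemma ml_eq_tsum (hγ0 : 0 < γ) {z : ℝ} (hz : 0 ≤ z) :
    mittagLeffler γ (z ^ γ) = ∑' n : ℕ, z ^ ((n:ℝ) * γ) / Gamma ((n:ℝ) * γ + 1) := by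
  unfold mittagLeffler
  congr 1; funext n
  rw [← Real.rpow_natCast (z ^ γ) n, ← Real.rpow_mul hz, mul_comm]

lemma hasDerivAt_ml (hγ0 : 0 < γ) (hγ1 : γ < 1) {ρ : ℝ} (hρ : 0 < ρ) :
    HasDerivAt (fun z => mittagLeffler γ (z ^ γ))
      (∑' n : ℕ, ((n:ℝ) * γ) * ρ ^ ((n:ℝ) * γ - 1) / Gamma ((n:ℝ) * γ + 1)) ρ := by
  set t : Set ℝ := Set.Ioo (ρ/2) (ρ+1) with ht_def
  have hρt : ρ ∈ t := ⟨by linarith, by linarith⟩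
  have hmem : ∀ z ∈ t, 0 < z := fun z hz => lt_trans (by linarith) hz.1
  set g : ℕ → ℝ → ℝ := fun n z => z ^ ((n:ℝ) * γ) / Gamma ((n:ℝ) * γ + 1) with hg_def
  set g' : ℕ → ℝ → ℝ := fun n z => ((n:ℝ) * γ) * z ^ ((n:ℝ) * γ - 1) / Gamma ((n:ℝ) * γ + 1)
    with hg'_def
  set u : ℕ → ℝ := fun n => (((n:ℝ) * γ) * ((ρ+1) ^ γ) ^ n / Gamma ((n:ℝ) * γ + 1)) * (2/ρ)
    with hu_def
  have hu : Summable u := (summable_ml_deriv hγ0 hγ1 (by positivity)).mul_right _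
  have hg : ∀ n z, z ∈ t → HasDerivAt (g n) (g' n z) z := by
    intro n z hz
    exact (Real.hasDerivAt_rpow_const (Or.inl (hmem z hz).ne')).div_const _
  have hg' : ∀ n z, z ∈ t → ‖g' n z‖ ≤ u n := by
    intro n z hz
    have hz0 := hmem z hz
    have hΓ : (0:ℝ) < Gamma ((n:ℝ) * γ + 1) := Gamma_pos_of_pos (by positivity)
    rw [Real.norm_of_nonneg (by positivity)]
    have hz_bound : z ^ ((n:ℝ)*γ - 1) ≤ ((ρ+1)^γ)^n * (2/ρ) := by
      rw [Real.rpow_sub hz0, Real.rpow_one]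
      have h1 : z ^ ((n:ℝ)*γ) ≤ (ρ+1) ^ ((n:ℝ)*γ) :=
        Real.rpow_le_rpow hz0.le (le_of_lt hz.2) (by positivity)
      have h2 : (ρ+1) ^ ((n:ℝ)*γ) = ((ρ+1)^γ)^n := by
        rw [← Real.rpow_natCast ((ρ+1)^γ) n, ← Real.rpow_mul (by positivity), mul_comm]
      have h3 : 1/z ≤ 2/ρ := by
        rw [div_le_div_iff₀ hz0 hρ]
        nlinarith [hz.1]
      calc z ^ ((n:ℝ)*γ) / z = z ^ ((n:ℝ)*γ) * (1/z) := by ring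
        _ ≤ ((ρ+1)^γ)^n * (2/ρ) := by
            apply mul_le_mul (h2 ▸ h1) h3 (by positivity) (by positivity)
    rw [hg'_def, hu_def]
    simp only
    rw [show ((n:ℝ)*γ) * ((ρ+1)^γ)^n / Gamma ((n:ℝ)*γ+1) * (2/ρ)
        = ((n:ℝ)*γ) * (((ρ+1)^γ)^n * (2/ρ)) / Gamma ((n:ℝ)*γ+1) by ring]
    gcongr
  have hg0 : Summable fun n => g n ρ := by
    have := summable_ml hγ0 hγ1 (x := (ρ ^ γ)) (by positivity)
    refine this.congr fun n => ?_
    rw [hg_def]; simp only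
    rw [← Real.rpow_natCast (ρ ^ γ) n, ← Real.rpow_mul hρ.le, mul_comm]
  have H := hasDerivAt_tsum_of_isPreconnected hu isOpen_Ioo (convex_Ioo _ _).isPreconnected
    hg hg' hρt hg0 hρt
  refine H.congr_of_eventuallyEq ?_
  filter_upwards [isOpen_Ioo.mem_nhds hρt] with z hz
  exact ml_eq_tsum hγ0 (hmem z hz).le


/-- The function `ν(ζ,τ) = ζ E_γ(τ^γ)` satisfies `ν(ζ,0) = ζ` and solves the nonlinear
time-fractional Fokker–Planck equation
`D^γ_τ ν = −∂_ζ(3ν² − (ζ/2)ν) + ∂²_{ζζ}(ζν²)` for `τ > 0`,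
where `D^γ_τ` is the Caputo time-fractional derivative. -/
theorem tffpe_example3 (γ : ℝ) (hγ0 : 0 < γ) (hγ1 : γ < 1)
    (ν : ℝ → ℝ → ℝ) (hν : ν = fun ζ τ => ζ * mittagLeffler γ (τ ^ γ)) :
    (∀ ζ : ℝ, ν ζ 0 = ζ) ∧
    ∀ (ζ τ : ℝ), 0 < τ →
      (1 / Real.Gamma (1 - γ)) * (∫ ρ in (0:ℝ)..τ, deriv (fun ρ => ν ζ ρ) ρ * (τ - ρ) ^ (-γ))
        = -(deriv (fun z => 3 * (ν z τ) ^ 2 - z / 2 * ν z τ) ζ)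
          + deriv (deriv fun z => z * (ν z τ) ^ 2) ζ := by
  have hΓpos : (0:ℝ) < Gamma (1-γ) := Gamma_pos_of_pos (by linarith)
  constructor
  · intro ζ
    simp only [hν]
    rw [Real.zero_rpow hγ0.ne']
    have h1 : mittagLeffler γ 0 = 1 := by
      unfold mittagLeffler
      rw [tsum_eq_single 0 (fun n hn => by simp [zero_pow hn])]
      simp [Real.Gamma_one]
    rw [h1, mul_one]
  · intro ζ τ hτ
    simp only [hν]
    set E := mittagLeffler γ (τ ^ γ) with hE
    have hzE : ∀ z:ℝ, HasDerivAt (fun z => z * E) E z := fun z => by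
      simpa using (hasDerivAt_id z).mul_const E
    have hd1 : HasDerivAt (fun z => 3 * (z*E)^2 - z/2*(z*E)) (6*E^2*ζ - ζ*E) ζ := by
      have h := (((hzE ζ).pow 2).const_mul 3).sub (((hasDerivAt_id ζ).div_const 2).mul (hzE ζ))
      refine h.congr_deriv ?_
      simp only [id_eq]
      push_cast
      ring
    have hd2 : deriv (deriv fun z => z * (z*E)^2) ζ = 6*E^2*ζ := by
      have hd2fun : (deriv fun z => z * (z*E)^2) = fun z => 3*E^2*z^2 := by
        funext z
        have h := (hasDerivAt_id z).mul ((hzE z).pow 2)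
        have h2 : HasDerivAt (fun z => z * (z*E)^2) (3*E^2*z^2) z := by
          refine h.congr_deriv ?_
          simp only [id_eq, Pi.pow_apply]
          push_cast
          ring
        exact h2.deriv
      rw [hd2fun]
      have h : HasDerivAt (fun z : ℝ => 3*E^2*z^2) (6*E^2*ζ) ζ := by
        have := (hasDerivAt_pow 2 ζ).const_mul (3*E^2)
        refine this.congr_deriv ?_
        push_cast
        ring
      exact h.deriv
    rw [hd1.deriv, hd2]
    -- the Caputo derivative side
    set D : ℕ → ℝ → ℝ := fun n ρ => ((n:ℝ)*γ) * ρ^((n:ℝ)*γ-1)/Gamma ((n:ℝ)*γ+1) with hD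
    set F : ℕ → ℝ → ℝ := fun n ρ => D n ρ * (τ-ρ)^(-γ) with hF
    have ha : ∀ n:ℕ, (0:ℝ) < ((n:ℝ)+1)*γ := fun n => by positivity
    have hFeq : ∀ n:ℕ, F (n+1) = fun ρ =>
        ((((n:ℝ)+1)*γ)/Gamma ((((n:ℝ)+1)*γ)+1)) * (ρ^(((((n:ℝ)+1)*γ))-1) * (τ-ρ)^((1-γ)-1)) := by
      intro n
      funext ρ
      simp only [hF, hD]
      push_cast
      rw [show (1:ℝ)-γ-1 = -γ by ring]
      ring
    have hInt : ∀ n:ℕ, Integrable (F n) (volume.restrict (Set.Ioc 0 τ)) := by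
      intro n
      match n with
      | 0 =>
        refine (integrable_zero _ _ _).congr ?_
        filter_upwards with ρ
        simp [hF, hD]
      | n+1 =>
        rw [hFeq n]
        exact ((intervalIntegrable_iff_integrableOn_Ioc_of_le hτ.le).mp
          (real_beta_integrable (ha n) (by linarith) hτ)).const_mul _
    have hVal : ∀ n:ℕ, (∫ ρ in Set.Ioc 0 τ, F (n+1) ρ)
        = Gamma (1-γ) * ((τ^γ)^n / Gamma ((n:ℝ)*γ+1)) := by
      intro n
      rw [hFeq n]
      rw [MeasureTheory.integral_const_mul]
      rw [← intervalIntegral.integral_of_le hτ.le]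
      rw [real_beta (ha n) (by linarith) hτ]
      rw [show ((n:ℝ)+1)*γ + (1-γ) = (n:ℝ)*γ+1 by ring]
      rw [show (n:ℝ)*γ+1-1 = (n:ℝ)*γ by ring]
      rw [Real.Gamma_add_one (ha n).ne']
      rw [← Real.rpow_natCast (τ^γ) n, ← Real.rpow_mul hτ.le, mul_comm γ (n:ℝ)]
      have h1 : Gamma (((n:ℝ)+1)*γ) ≠ 0 := (Gamma_pos_of_pos (ha n)).ne'
      have h2 : Gamma ((n:ℝ)*γ+1) ≠ 0 := (Gamma_pos_of_pos (by positivity)).ne'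
      field_simp
    have hnonneg : ∀ (n:ℕ) (ρ:ℝ), ρ ∈ Set.Ioc 0 τ → 0 ≤ F n ρ := by
      intro n ρ hρ
      have h1 : (0:ℝ) ≤ τ - ρ := by linarith [hρ.2]
      simp only [hF, hD]
      have := hρ.1
      positivity
    have hnorm : ∀ n:ℕ, (∫ ρ in Set.Ioc 0 τ, ‖F n ρ‖) = ∫ ρ in Set.Ioc 0 τ, F n ρ := by
      intro n
      apply setIntegral_congr_fun measurableSet_Ioc
      intro ρ hρ
      exact Real.norm_of_nonneg (hnonneg n ρ hρ)
    have hW : Summable (fun n:ℕ => Gamma (1-γ) * ((τ^γ)^n / Gamma ((n:ℝ)*γ+1))) :=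
      (summable_ml hγ0 hγ1 (by positivity)).mul_left _
    have hV0 : (∫ ρ in Set.Ioc 0 τ, F 0 ρ) = 0 := by
      simp [hF, hD]
    have hVsum : Summable (fun n:ℕ => ∫ ρ in Set.Ioc 0 τ, F n ρ) := by
      apply (summable_nat_add_iff 1).mp
      exact hW.congr (fun n => (hVal n).symm)
    have hswap := MeasureTheory.integral_tsum_of_summable_integral_norm hInt
      (hVsum.congr (fun n => (hnorm n).symm))
    have hLHS : (∫ ρ in (0:ℝ)..τ, deriv (fun ρ => ζ * mittagLeffler γ (ρ^γ)) ρ * (τ-ρ)^(-γ))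
        = ζ * (Gamma (1-γ) * E) := by
      calc (∫ ρ in (0:ℝ)..τ, deriv (fun ρ => ζ * mittagLeffler γ (ρ^γ)) ρ * (τ-ρ)^(-γ))
          = ∫ ρ in Set.Ioc 0 τ, ζ * ((∑' n:ℕ, D n ρ) * (τ-ρ)^(-γ)) := by
            rw [intervalIntegral.integral_of_le hτ.le]
            apply setIntegral_congr_fun measurableSet_Ioc
            intro ρ hρ
            have hd := ((hasDerivAt_ml hγ0 hγ1 hρ.1).const_mul ζ).deriv
            dsimp only
            rw [hd]
            simp only [hD]
            ring
        _ = ζ * ∫ ρ in Set.Ioc 0 τ, ∑' n:ℕ, F n ρ := by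
            rw [MeasureTheory.integral_const_mul]
            congr 1
            apply setIntegral_congr_fun measurableSet_Ioc
            intro ρ _
            dsimp only
            exact tsum_mul_right.symm
        _ = ζ * ∑' n:ℕ, ∫ ρ in Set.Ioc 0 τ, F n ρ := by rw [← hswap]
        _ = ζ * (Gamma (1-γ) * E) := by
            congr 1
            rw [Summable.tsum_eq_zero_add hVsum, hV0, zero_add]
            calc (∑' n:ℕ, ∫ ρ in Set.Ioc 0 τ, F (n+1) ρ)
                = ∑' n:ℕ, Gamma (1-γ) * ((τ^γ)^n / Gamma ((n:ℝ)*γ+1)) := tsum_congr hVal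
              _ = Gamma (1-γ) * ∑' n:ℕ, (τ^γ)^n / Gamma ((n:ℝ)*γ+1) := tsum_mul_left
              _ = Gamma (1-γ) * E := by rw [hE]; rfl
    rw [hLHS]
    field_simp
    ring
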